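/- For every y > 0, ∫₀^y η^{−n₂−1} |ũ(η)| dη + ∫_y^∞ η^{−n₁−1} |ũ(η)| dη < ∞. -/

import Mathlib

open MeasureTheory

/-- for every y > 0, ∫₀^y η^{−n₂−1}|ũ(η)|dη + ∫_y^∞ η^{−n₁−1}|ũ(η)|dη < ∞. -/
theorem stmt_9
    (δ r θ n₁ n₂ : ℝ)
    (hδ : 0 < δ) (hr : 0 < r) (hθ : θ ≠ 0)
    (hn₂0 : n₂ < 0) (hn₁1 : 1 < n₁)
    (hroot₁ : θ ^ 2 / 2 * n₁ ^ 2 + (δ - r - θ ^ 2 / 2) * n₁ - δ = 0)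
    (hroot₂ : θ ^ 2 / 2 * n₂ ^ 2 + (δ - r - θ ^ 2 / 2) * n₂ - δ = 0)
    (u u' I utld : ℝ → ℝ)
    (hu_mono : StrictMonoOn u (Set.Ici 0))
    (hu_conc : StrictConcaveOn ℝ (Set.Ici 0) u)
    (hu_cont : ContinuousOn u (Set.Ici 0))
    (hu_deriv : ∀ c : ℝ, 0 < c → HasDerivAt u (u' c) c)
    (hu'_cont : ContinuousOn u' (Set.Ioi 0))
    (hu'_top : Filter.Tendsto u' Filter.atTop (nhds 0))
    (hu'_zero : Filter.Tendsto u' (nhdsWithin 0 (Set.Ioi 0)) Filter.atTop)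
    (hI_pos : ∀ y : ℝ, 0 < y → 0 < I y)
    (hI_left : ∀ y : ℝ, 0 < y → u' (I y) = y)
    (hI_right : ∀ c : ℝ, 0 < c → I (u' c) = c)
    (hI_anti : StrictAntiOn I (Set.Ioi 0))
    (hI_cont : ContinuousOn I (Set.Ioi 0))
    (hI_zero : Filter.Tendsto I (nhdsWithin 0 (Set.Ioi 0)) Filter.atTop)
    (hI_top : Filter.Tendsto I Filter.atTop (nhds 0))
    (hutld : ∀ y : ℝ, 0 < y → utld y = u (I y) - y * I y)
    (hI_int : ∀ y : ℝ, 0 < y →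
      MeasureTheory.IntegrableOn (fun η => η ^ (-n₂) * I η) (Set.Ioo 0 y) MeasureTheory.volume)
    :
    ∀ y : ℝ, 0 < y →
      MeasureTheory.IntegrableOn (fun η => η ^ (-n₂ - 1) * |utld η|) (Set.Ioo 0 y)
        MeasureTheory.volume ∧
      MeasureTheory.IntegrableOn (fun η => η ^ (-n₁ - 1) * |utld η|) (Set.Ioi y)
        MeasureTheory.volume := by
  intro y hy
  -- continuity of I at points of (0, ∞)
  have hIc : ∀ x : ℝ, 0 < x → ContinuousAt I x := fun x hx =>
    hI_cont.continuousAt (Ioi_mem_nhds hx)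
  -- key Legendre-type inequality
  have key : ∀ η : ℝ, 0 < η → ∀ c : ℝ, 0 ≤ c →
      u c - η * c ≤ u (I η) - η * I η := by
    intro η hη c hc
    have hIη : 0 < I η := hI_pos η hη
    have hd : HasDerivAt u η (I η) := by
      have := hu_deriv (I η) hIη
      rwa [hI_left η hη] at this
    rcases lt_trichotomy c (I η) with h | h | h
    · have hs := hu_conc.concaveOn.le_slope_of_hasDerivAt (Set.mem_Ici.2 hc)
        (Set.mem_Ici.2 hIη.le) h hd
      rw [slope_def_field] at hs
      have h1 : 0 < I η - c := by linarith
      rw [le_div_iff₀ h1] at hs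
      nlinarith
    · rw [h]
    · have hs := hu_conc.concaveOn.slope_le_of_hasDerivAt
        (Set.mem_Ici.2 hIη.le) (Set.mem_Ici.2 hc) h hd
      rw [slope_def_field] at hs
      have h1 : 0 < c - I η := by linarith
      rw [div_le_iff₀ h1] at hs
      nlinarith
  -- monotonicity/Lipschitz sandwich for utld
  have hmono : ∀ a b : ℝ, 0 < a → a < b →
      (b - a) * I b ≤ utld a - utld b ∧ utld a - utld b ≤ (b - a) * I a := by
    intro a b ha hab
    have hb : 0 < b := ha.trans hab
    rw [hutld a ha, hutld b hb]
    constructor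
    · have h1 := key a ha (I b) (hI_pos b hb).le
      nlinarith
    · have h1 := key b hb (I a) (hI_pos a ha).le
      nlinarith
  -- derivative of utld
  have hderiv : ∀ x : ℝ, 0 < x → HasDerivAt utld (-(I x)) x := by
    intro x hx
    rw [hasDerivAt_iff_tendsto_slope]
    have hlo : Filter.Tendsto (fun z => min (-(I z)) (-(I x))) (nhdsWithin x {x}ᶜ)
        (nhds (-(I x))) := by
      have h1 : ContinuousAt (fun z => min (-(I z)) (-(I x))) x :=
        ((hIc x hx).neg).min continuousAt_const
      have h2 := h1.tendsto.mono_left (nhdsWithin_le_nhds (s := {x}ᶜ))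
      simpa using h2
    have hhi : Filter.Tendsto (fun z => max (-(I z)) (-(I x))) (nhdsWithin x {x}ᶜ)
        (nhds (-(I x))) := by
      have h1 : ContinuousAt (fun z => max (-(I z)) (-(I x))) x :=
        ((hIc x hx).neg).max continuousAt_const
      have h2 := h1.tendsto.mono_left (nhdsWithin_le_nhds (s := {x}ᶜ))
      simpa using h2
    have hev : ∀ᶠ z in nhdsWithin x {x}ᶜ,
        min (-(I z)) (-(I x)) ≤ slope utld x z ∧
        slope utld x z ≤ max (-(I z)) (-(I x)) := by
      have hmem : Set.Ioi (0:ℝ) ∈ nhdsWithin x {x}ᶜ :=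
        nhdsWithin_le_nhds (Ioi_mem_nhds hx)
      filter_upwards [hmem, self_mem_nhdsWithin] with z hz hne
      have hz0 : 0 < z := hz
      have hzx : z ≠ x := hne
      rw [slope_def_field]
      rcases lt_or_gt_of_ne hzx with h | h
      · obtain ⟨h1, h2⟩ := hmono z x hz0 h
        have hneg : z - x < 0 := by linarith
        constructor
        · refine le_trans (min_le_left _ _) ?_
          rw [le_div_iff_of_neg hneg]
          nlinarith
        · refine le_trans ?_ (le_max_right _ _)
          rw [div_le_iff_of_neg hneg]
          nlinarith
      · obtain ⟨h1, h2⟩ := hmono x z hx h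
        have hpos : 0 < z - x := by linarith
        constructor
        · refine le_trans (min_le_right _ _) ?_
          rw [le_div_iff₀ hpos]
          nlinarith
        · refine le_trans ?_ (le_max_left _ _)
          rw [div_le_iff₀ hpos]
          nlinarith
    exact tendsto_of_tendsto_of_tendsto_of_le_of_le' hlo hhi
      (hev.mono fun z h => h.1) (hev.mono fun z h => h.2)
  -- interval integrability of I
  have hII : ∀ a b : ℝ, 0 < a → 0 < b → IntervalIntegrable I volume a b := by
    intro a b ha hb
    apply ContinuousOn.intervalIntegrable
    exact hI_cont.mono fun z hz => lt_of_lt_of_le (lt_min ha hb) hz.1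
  -- FTC : utld a = utld y + ∫ s in a..y, I s
  have hFTC : ∀ a : ℝ, 0 < a → utld a = utld y + ∫ s in a..y, I s := by
    intro a ha
    have h1 : (∫ s in a..y, -(I s)) = utld y - utld a := by
      apply intervalIntegral.integral_eq_sub_of_hasDerivAt
      · intro s hs
        exact hderiv s (lt_of_lt_of_le (lt_min ha hy) hs.1)
      · exact (hII a y ha hy).neg
    rw [intervalIntegral.integral_neg] at h1
    linarith
  -- u 0 is a lower bound of utld
  have hu0 : ∀ η : ℝ, 0 < η → u 0 ≤ utld η := by
    intro η hη
    rw [hutld η hη]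
    simpa using key η hη 0 le_rfl
  -- bound on [y, ∞)
  have hbd2 : ∀ η : ℝ, y ≤ η → |utld η| ≤ max |u 0| |utld y| := by
    intro η hη
    have hη0 : 0 < η := lt_of_lt_of_le hy hη
    have hle : utld η ≤ utld y := by
      rcases eq_or_lt_of_le hη with h | h
      · rw [← h]
      · have h1 := (hmono y η hy h).1
        nlinarith [hI_pos η hη0]
    have hge := hu0 η hη0
    rw [abs_le]
    constructor
    · have h1 : -max |u 0| |utld y| ≤ -|u 0| := neg_le_neg (le_max_left _ _)
      have h2 : -|u 0| ≤ u 0 := neg_abs_le _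
      linarith
    · exact le_trans hle (le_trans (le_abs_self _) (le_max_right _ _))
  -- continuous version of utld
  have hg : ContinuousOn (fun η => u (I η) - η * I η) (Set.Ioi 0) := by
    have h1 : ContinuousOn (fun η => u (I η)) (Set.Ioi 0) :=
      hu_cont.comp hI_cont fun z hz => Set.mem_Ici.2 (hI_pos z hz).le
    exact h1.sub (continuousOn_id.mul hI_cont)
  -- measurability helper
  have hmeas : ∀ (c : ℝ) (s : Set ℝ), MeasurableSet s → s ⊆ Set.Ioi 0 →
      AEStronglyMeasurable (fun η => η ^ c * |utld η|) (volume.restrict s) := by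
    intro c s hs hsub
    have hcont : ContinuousOn (fun η => η ^ c * |u (I η) - η * I η|) (Set.Ioi 0) := by
      apply ContinuousOn.mul
      · intro z hz
        exact (Real.continuousAt_rpow_const z c (Or.inl (ne_of_gt hz))).continuousWithinAt
      · exact hg.abs
    have h1 := ((hcont.mono hsub).aestronglyMeasurable hs (μ := volume))
    apply h1.congr
    apply (ae_restrict_iff' hs).2
    filter_upwards with η hη
    rw [hutld η (hsub hη)]
  constructor
  · -- the part on (0, y)
    have hkc : ContinuousOn (fun s : ℝ => s ^ (-n₂) * I s) (Set.Ioi 0) := by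
      apply ContinuousOn.mul ?_ hI_cont
      intro z hz
      exact (Real.continuousAt_rpow_const z _ (Or.inl (ne_of_gt hz))).continuousWithinAt
    have hkII : ∀ a : ℝ, 0 < a →
        IntervalIntegrable (fun s : ℝ => s ^ (-n₂) * I s) volume a y := by
      intro a ha
      exact (hkc.mono fun z hz => lt_of_lt_of_le (lt_min ha hy) hz.1).intervalIntegrable
    have hJd : ∀ a : ℝ, 0 < a →
        HasDerivAt (fun a => ∫ s in a..y, I s) (-(I a)) a := by
      intro a ha
      exact intervalIntegral.integral_hasDerivAt_left (hII a y ha hy)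
        (hI_cont.stronglyMeasurableAtFilter isOpen_Ioi a ha) (hIc a ha)
    have hKd : ∀ a : ℝ, 0 < a →
        HasDerivAt (fun a => ∫ s in a..y, s ^ (-n₂) * I s) (-(a ^ (-n₂) * I a)) a := by
      intro a ha
      exact intervalIntegral.integral_hasDerivAt_left (hkII a ha)
        (hkc.stronglyMeasurableAtFilter isOpen_Ioi a ha)
        (hkc.continuousAt (Ioi_mem_nhds ha))
    have hJc : ContinuousOn (fun a => ∫ s in a..y, I s) (Set.Ioi 0) :=
      fun a ha => ((hJd a ha).continuousAt).continuousWithinAt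
    have hJnn : ∀ a : ℝ, 0 < a → a ≤ y → 0 ≤ ∫ s in a..y, I s := by
      intro a ha hay
      exact intervalIntegral.integral_nonneg hay fun s hs =>
        (hI_pos s (lt_of_lt_of_le ha hs.1)).le
    have hFd : ∀ a : ℝ, 0 < a → HasDerivAt
        (fun a => (1 / n₂) * ((∫ s in a..y, s ^ (-n₂) * I s) - a ^ (-n₂) * ∫ s in a..y, I s))
        (a ^ (-n₂ - 1) * ∫ s in a..y, I s) a := by
      intro a ha
      have h1 : HasDerivAt (fun x : ℝ => x ^ (-n₂)) (-n₂ * a ^ (-n₂ - 1)) a :=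
        Real.hasDerivAt_rpow_const (Or.inl (ne_of_gt ha))
      have h2 := ((hKd a ha).sub (h1.mul (hJd a ha))).const_mul (1 / n₂)
      refine h2.congr_deriv ?_
      have hn : n₂ ≠ 0 := ne_of_lt hn₂0
      field_simp
      ring
    have hhc : ContinuousOn (fun η => η ^ (-n₂ - 1) * ∫ s in η..y, I s) (Set.Ioi 0) := by
      apply ContinuousOn.mul ?_ hJc
      intro z hz
      exact (Real.continuousAt_rpow_const z _ (Or.inl (ne_of_gt hz))).continuousWithinAt
    have hFint : ∀ a : ℝ, 0 < a → a < y →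
        (∫ η in a..y, η ^ (-n₂ - 1) * ∫ s in η..y, I s) =
          (1 / n₂) * (a ^ (-n₂) * (∫ s in a..y, I s) - ∫ s in a..y, s ^ (-n₂) * I s) := by
      intro a ha hay
      have h0 := intervalIntegral.integral_eq_sub_of_hasDerivAt
        (f := fun a => (1 / n₂) * ((∫ s in a..y, s ^ (-n₂) * I s) - a ^ (-n₂) * ∫ s in a..y, I s))
        (f' := fun η => η ^ (-n₂ - 1) * ∫ s in η..y, I s)
        (fun s hs => hFd s (lt_of_lt_of_le (lt_min ha hy) hs.1))
        ((hhc.mono fun z hz => lt_of_lt_of_le (lt_min ha hy) hz.1).intervalIntegrable)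
      rw [h0]
      simp only [intervalIntegral.integral_same]
      ring
    have hknn' : ∀ᵐ η ∂(volume.restrict (Set.Ioo 0 y)), 0 ≤ η ^ (-n₂) * I η := by
      apply (ae_restrict_iff' measurableSet_Ioo).2
      filter_upwards with η hη
      exact mul_nonneg (Real.rpow_nonneg hη.1.le _) (hI_pos η hη.1).le
    have hKle : ∀ a : ℝ, 0 < a → a < y →
        (∫ s in a..y, s ^ (-n₂) * I s) ≤ ∫ η in Set.Ioo 0 y, η ^ (-n₂) * I η := by
      intro a ha hay
      rw [intervalIntegral.integral_of_le hay.le, MeasureTheory.integral_Ioc_eq_integral_Ioo]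
      exact setIntegral_mono_set (hI_int y hy) hknn'
        (HasSubset.Subset.eventuallyLE (Set.Ioo_subset_Ioo ha.le le_rfl))
    have hJle : ∀ a : ℝ, 0 < a → a < y →
        a ^ (-n₂) * (∫ s in a..y, I s) ≤ ∫ s in a..y, s ^ (-n₂) * I s := by
      intro a ha hay
      have h1 : (∫ s in a..y, I s) ≤ ∫ s in a..y, a ^ n₂ * (s ^ (-n₂) * I s) := by
        apply intervalIntegral.integral_mono_on hay.le (hII a y ha hy)
          ((hkII a ha).const_mul _)
        intro s hs
        have hs0 : 0 < s := lt_of_lt_of_le ha hs.1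
        have h2 : 1 ≤ a ^ n₂ * s ^ (-n₂) := by
          have h3 : a ^ (-n₂) ≤ s ^ (-n₂) := Real.rpow_le_rpow ha.le hs.1 (by linarith)
          have h4 : 0 < a ^ n₂ := Real.rpow_pos_of_pos ha _
          have h5 : a ^ n₂ * a ^ (-n₂) = 1 := by
            rw [← Real.rpow_add ha]; simp
          nlinarith
        calc I s = 1 * I s := (one_mul _).symm
          _ ≤ a ^ n₂ * s ^ (-n₂) * I s :=
              mul_le_mul_of_nonneg_right h2 (hI_pos s hs0).le
          _ = a ^ n₂ * (s ^ (-n₂) * I s) := mul_assoc _ _ _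
      rw [intervalIntegral.integral_const_mul] at h1
      have h4 : 0 < a ^ (-n₂) := Real.rpow_pos_of_pos ha _
      have h5 : a ^ (-n₂) * a ^ n₂ = 1 := by rw [← Real.rpow_add ha]; simp
      calc a ^ (-n₂) * ∫ s in a..y, I s
          ≤ a ^ (-n₂) * (a ^ n₂ * ∫ s in a..y, s ^ (-n₂) * I s) :=
            mul_le_mul_of_nonneg_left h1 h4.le
        _ = (a ^ (-n₂) * a ^ n₂) * ∫ s in a..y, s ^ (-n₂) * I s := by ring
        _ = _ := by rw [h5, one_mul]
    have hbd : ∀ a : ℝ, 0 < a → a < y →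
        (∫ η in Set.Ioc a y, ‖η ^ (-n₂ - 1) * ∫ s in η..y, I s‖) ≤
          (∫ η in Set.Ioo 0 y, η ^ (-n₂) * I η) / (-n₂) := by
      intro a ha hay
      have hnorm : Set.EqOn (fun η => ‖η ^ (-n₂ - 1) * ∫ s in η..y, I s‖)
          (fun η => η ^ (-n₂ - 1) * ∫ s in η..y, I s) (Set.Ioc a y) := by
        intro η hη
        have hη0 : 0 < η := ha.trans hη.1
        exact Real.norm_of_nonneg
          (mul_nonneg (Real.rpow_nonneg hη0.le _) (hJnn η hη0 hη.2))
      rw [setIntegral_congr_fun measurableSet_Ioc hnorm,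
        ← intervalIntegral.integral_of_le hay.le, hFint a ha hay]
      rw [le_div_iff₀ (by linarith : (0:ℝ) < -n₂)]
      have hn : n₂ ≠ 0 := ne_of_lt hn₂0
      have heq : 1 / n₂ * (a ^ (-n₂) * (∫ s in a..y, I s) -
            ∫ s in a..y, s ^ (-n₂) * I s) * (-n₂)
          = (∫ s in a..y, s ^ (-n₂) * I s) - a ^ (-n₂) * (∫ s in a..y, I s) := by
        field_simp
        ring
      rw [heq]
      have h1 := hJle a ha hay
      have h2 := hKle a ha hay
      have h3 : 0 ≤ a ^ (-n₂) * ∫ s in a..y, I s :=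
        mul_nonneg (Real.rpow_nonneg ha.le _) (hJnn a ha hay.le)
      linarith
    have hseq : Filter.Tendsto (fun i : ℕ => y / ((i : ℝ) + 2)) Filter.atTop (nhds 0) := by
      apply Filter.Tendsto.div_atTop tendsto_const_nhds
      exact Filter.tendsto_atTop_add_const_right _ 2 tendsto_natCast_atTop_atTop
    have hIoc : IntegrableOn (fun η => η ^ (-n₂ - 1) * ∫ s in η..y, I s)
        (Set.Ioc 0 y) volume := by
      refine MeasureTheory.integrableOn_Ioc_of_intervalIntegral_norm_bounded_left
        (I := (∫ η in Set.Ioo 0 y, η ^ (-n₂) * I η) / (-n₂))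
        (a := fun i : ℕ => y / ((i : ℝ) + 2)) ?_ hseq ?_
      · intro i
        have hai : 0 < y / ((i : ℝ) + 2) := by positivity
        exact ((hhc.mono fun z hz => lt_of_lt_of_le hai hz.1).integrableOn_Icc).mono_set
          Set.Ioc_subset_Icc_self
      · filter_upwards with i
        have hcast : (0:ℝ) ≤ (i : ℝ) := Nat.cast_nonneg i
        have hai : 0 < y / ((i : ℝ) + 2) := by positivity
        have halt : y / ((i : ℝ) + 2) < y := div_lt_self hy (by linarith)
        exact hbd _ hai halt
    have hB2 : IntegrableOn (fun η => η ^ (-n₂ - 1) * ∫ s in η..y, I s)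
        (Set.Ioo 0 y) volume := hIoc.mono_set Set.Ioo_subset_Ioc_self
    have hb1 : IntegrableOn (fun η => |utld y| * η ^ (-n₂ - 1)) (Set.Ioo 0 y) volume := by
      have h1 : IntervalIntegrable (fun η : ℝ => η ^ (-n₂ - 1)) volume 0 y :=
        intervalIntegral.intervalIntegrable_rpow' (by linarith)
      have h2 : IntegrableOn (fun η : ℝ => η ^ (-n₂ - 1)) (Set.Ioc 0 y) volume := by
        rwa [intervalIntegrable_iff_integrableOn_Ioc_of_le hy.le] at h1
      exact (h2.mono_set Set.Ioo_subset_Ioc_self).const_mul _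
    apply Integrable.mono' (hb1.add hB2) (hmeas _ _ measurableSet_Ioo fun z hz => hz.1)
    apply (ae_restrict_iff' measurableSet_Ioo).2
    filter_upwards with η hη
    have hη0 : 0 < η := hη.1
    have hJη : 0 ≤ ∫ s in η..y, I s := hJnn η hη0 hη.2.le
    have habs : |utld η| ≤ |utld y| + ∫ s in η..y, I s := by
      rw [hFTC η hη0]
      calc |utld y + ∫ s in η..y, I s| ≤ |utld y| + |∫ s in η..y, I s| := abs_add_le _ _
        _ = |utld y| + ∫ s in η..y, I s := by rw [abs_of_nonneg hJη]
    rw [Real.norm_eq_abs, abs_mul, abs_of_nonneg (Real.rpow_nonneg hη0.le _), abs_abs]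
    have hr0 : 0 ≤ η ^ (-n₂ - 1) := Real.rpow_nonneg hη0.le _
    have : η ^ (-n₂ - 1) * |utld η| ≤
        |utld y| * η ^ (-n₂ - 1) + η ^ (-n₂ - 1) * ∫ s in η..y, I s := by
      calc η ^ (-n₂ - 1) * |utld η|
          ≤ η ^ (-n₂ - 1) * (|utld y| + ∫ s in η..y, I s) :=
            mul_le_mul_of_nonneg_left habs hr0
        _ = |utld y| * η ^ (-n₂ - 1) + η ^ (-n₂ - 1) * ∫ s in η..y, I s := by ring
    simpa using this
  · -- the part on (y, ∞)
    have hbound : IntegrableOn (fun η => max |u 0| |utld y| * η ^ (-n₁ - 1))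
        (Set.Ioi y) volume :=
      (integrableOn_Ioi_rpow_of_lt (by linarith) hy).const_mul _
    apply Integrable.mono' hbound
      (hmeas _ _ measurableSet_Ioi fun z hz => hy.trans hz)
    apply (ae_restrict_iff' measurableSet_Ioi).2
    filter_upwards with η hη
    have hη0 : 0 < η := hy.trans hη
    rw [Real.norm_eq_abs, abs_mul, abs_of_nonneg (Real.rpow_nonneg hη0.le _), abs_abs,
      mul_comm (max |u 0| |utld y|)]
    exact mul_le_mul_of_nonneg_left (hbd2 η hη.le) (Real.rpow_nonneg hη0.le _)
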